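/- Let G and Z be compact topological abelian groups, β ∈ Z and α ∈ G elements generating dense cyclic subgroups, and let π: Z → G be a continuous surjection satisfying π(g + β) = π(g) + α for all g ∈ Z. Then the map f(z) := π(z) − π(0) is a continuous group homomorphism from Z to G. -/

import Mathlib

/-- If `Z`, `G` are compact abelian topological groups with
topological generators `β`, `α`, and `π : Z → G` is a continuous surjection
with `π (g + β) = π g + α`, then `f z = π z - π 0` is a continuous group
homomorphism. -/
theorem stmt_2 {Z G : Type} [AddCommGroup Z] [TopologicalSpace Z]
    [IsTopologicalAddGroup Z] [CompactSpace Z] [T2Space Z]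
    [AddCommGroup G] [TopologicalSpace G] [IsTopologicalAddGroup G]
    [CompactSpace G] [T2Space G]
    (β : Z) (hβ : Dense (Set.range fun n : ℤ => n • β))
    (α : G) (hα : Dense (Set.range fun n : ℤ => n • α))
    (π : Z → G) (hcont : Continuous π) (hsurj : Function.Surjective π)
    (hequi : ∀ g : Z, π (g + β) = π g + α) :
    Continuous (fun z : Z => π z - π 0) ∧
      ∀ z w : Z, π (z + w) - π 0 = (π z - π 0) + (π w - π 0) := by
  have key : ∀ (g : Z) (n : ℤ), π (g + n • β) = π g + n • α := by
    intro g n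
    induction n using Int.induction_on with
    | zero => simp
    | succ k ih =>
        have : g + (k + 1 : ℤ) • β = (g + (k : ℤ) • β) + β := by
          rw [add_smul, one_smul, add_assoc]
        rw [this, hequi, ih, add_smul, one_smul, add_assoc]
    | pred k ih =>
        have h1 : π ((g + (-(k : ℤ) - 1) • β) + β) = π (g + (-(k : ℤ) - 1) • β) + α :=
          hequi _
        have h2 : (g + (-(k : ℤ) - 1) • β) + β = g + (-(k : ℤ)) • β := by
          rw [sub_smul, one_smul]; abel
        rw [h2, ih] at h1
        have : π (g + (-(k : ℤ) - 1) • β) = π g + (-(k : ℤ)) • α - α := by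
          rw [eq_sub_iff_add_eq, ← h1]
        rw [this, sub_smul, one_smul]; abel
  have hadd : ∀ z w : Z, π (z + w) - π z - π w + π 0 = 0 := by
    intro z
    have hfun : (fun w : Z => π (z + w) - π z - π w + π 0) = fun _ => 0 := by
      apply Continuous.ext_on hβ
      · continuity
      · continuity
      · rintro x ⟨n, rfl⟩
        simp only
        rw [key z n]
        have : (n : ℤ) • β = 0 + (n : ℤ) • β := by rw [zero_add]
        rw [this, key 0 n]
        abel
    intro w
    exact congrFun hfun w
  constructor
  · continuity
  · intro z w
    have := hadd z w
    have : π (z + w) = π z + π w - π 0 := by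
      have h := hadd z w
      linear_combination (norm := abel) h
    rw [this]; abel
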